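/- Let H be a Hilbert space with closed subspaces H1, H2, H3 and let α ∈ H. If α is orthogonal to H1 + H3 and α is orthogonal to H2 + H3, then α is orthogonal to the closure of H1 + H2 + H3. Consequently, if y ∈ H satisfies P_{H3} y = P_{closure(H1+H3)} y and P_{H3} y = P_{closure(H2+H3)} y, then P_{H3} y = P_{closure(H1+H2+H3)} y. -/

import Mathlib

open RealInnerProductSpace

/-- If `α` is orthogonal to `H1 + H3` and to `H2 + H3`, then `α` is orthogonal to
the closure of `H1 + H2 + H3`.  Consequently, if `P_{H3} y` agrees with the projections of `y`
onto `closure (H1 + H3)` and onto `closure (H2 + H3)`, then it agrees with the projection of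
`y` onto `closure (H1 + H2 + H3)`. -/
theorem orthogonal_to_joint_past
    {H : Type*} [NormedAddCommGroup H] [InnerProductSpace ℝ H] [CompleteSpace H]
    (H1 H2 H3 : Submodule ℝ H)
    (h1 : IsClosed (H1 : Set H)) (h2 : IsClosed (H2 : Set H)) (h3 : IsClosed (H3 : Set H))
    [CompleteSpace H3] :
    (∀ α : H, (∀ z ∈ H1 ⊔ H3, ⟪α, z⟫ = 0) → (∀ z ∈ H2 ⊔ H3, ⟪α, z⟫ = 0) →
        ∀ z ∈ (H1 ⊔ H2 ⊔ H3).topologicalClosure, ⟪α, z⟫ = 0) ∧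
    (∀ y : H,
        (Submodule.orthogonalProjectionOnto H3 y : H) =
          (Submodule.orthogonalProjectionOnto (H1 ⊔ H3).topologicalClosure y : H) →
        (Submodule.orthogonalProjectionOnto H3 y : H) =
          (Submodule.orthogonalProjectionOnto (H2 ⊔ H3).topologicalClosure y : H) →
        (Submodule.orthogonalProjectionOnto H3 y : H) =
          (Submodule.orthogonalProjectionOnto (H1 ⊔ H2 ⊔ H3).topologicalClosure y : H)) := by
  have hsup : H1 ⊔ H2 ⊔ H3 = (H1 ⊔ H3) ⊔ (H2 ⊔ H3) := by
    apply le_antisymm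
    · refine sup_le (sup_le ?_ ?_) ?_
      · exact le_sup_of_le_left le_sup_left
      · exact le_sup_of_le_right le_sup_left
      · exact le_sup_of_le_left le_sup_right
    · refine sup_le (sup_le ?_ ?_) (sup_le ?_ ?_)
      · exact le_sup_of_le_left le_sup_left
      · exact le_sup_right
      · exact le_sup_of_le_left le_sup_right
      · exact le_sup_right
  have key : ∀ α : H, (∀ z ∈ H1 ⊔ H3, ⟪α, z⟫ = 0) → (∀ z ∈ H2 ⊔ H3, ⟪α, z⟫ = 0) →
      ∀ z ∈ (H1 ⊔ H2 ⊔ H3).topologicalClosure, ⟪α, z⟫ = 0 := by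
    intro α ha hb z hz
    have hmem : ∀ w ∈ H1 ⊔ H2 ⊔ H3, ⟪α, w⟫ = 0 := by
      intro w hw
      rw [hsup] at hw
      obtain ⟨a, haH, b, hbH, rfl⟩ := Submodule.mem_sup.mp hw
      rw [inner_add_right, ha a haH, hb b hbH, add_zero]
    -- the set where ⟪α, ·⟫ = 0 is a closed set containing the sup
    have hclosed : IsClosed {w : H | ⟪α, w⟫ = 0} :=
      isClosed_eq (continuous_const.inner continuous_id) continuous_const
    have : (Submodule.topologicalClosure (H1 ⊔ H2 ⊔ H3) : Set H) ⊆ {w : H | ⟪α, w⟫ = 0} := by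
      refine closure_minimal ?_ hclosed
      intro w hw
      exact hmem w hw
    exact this hz
  refine ⟨key, ?_⟩
  intro y hy1 hy2
  set p : H := (Submodule.orthogonalProjectionOnto H3 y : H) with hp
  have hperp1 : ∀ z ∈ H1 ⊔ H3, ⟪y - p, z⟫ = 0 := by
    intro z hz
    have hm : z ∈ (H1 ⊔ H3).topologicalClosure :=
      Submodule.le_topologicalClosure _ hz
    have := Submodule.sub_starProjection_mem_orthogonal (K := (H1 ⊔ H3).topologicalClosure) y
    rw [Submodule.starProjection_apply, ← hy1] at this
    have h0 := (Submodule.mem_orthogonal _ _).mp this z hm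
    rw [real_inner_comm] at h0
    exact h0
  have hperp2 : ∀ z ∈ H2 ⊔ H3, ⟪y - p, z⟫ = 0 := by
    intro z hz
    have hm : z ∈ (H2 ⊔ H3).topologicalClosure :=
      Submodule.le_topologicalClosure _ hz
    have := Submodule.sub_starProjection_mem_orthogonal (K := (H2 ⊔ H3).topologicalClosure) y
    rw [Submodule.starProjection_apply, ← hy2] at this
    have h0 := (Submodule.mem_orthogonal _ _).mp this z hm
    rw [real_inner_comm] at h0
    exact h0
  have hpmem : p ∈ (H1 ⊔ H2 ⊔ H3).topologicalClosure := by
    apply Submodule.le_topologicalClosure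
    exact le_sup_right (a := H1 ⊔ H2) (Submodule.orthogonalProjectionOnto H3 y).2
  exact (Submodule.eq_starProjection_of_mem_of_inner_eq_zero hpmem
    (fun w hw => key (y - p) hperp1 hperp2 w hw)).symm
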